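/- If p ≡ 2 (mod 3) is a prime, then the p-th Fourier coefficient of η(3z)⁸ vanishes: b(p) = 0. -/
import Mathlib


open Polynomial in
/-- The `n`-th Fourier coefficient of `η(3z)⁸ = q·∏_{m≥1}(1 − q^(3m))⁸`, computed as the
coefficient of `X^n` in the (stabilizing) truncated product. -/
noncomputable def etaCoeff (n : ℕ) : ℤ :=
  ((X : Polynomial ℤ) * ∏ i ∈ Finset.Icc 1 n, ((1 : Polynomial ℤ) - X ^ (3 * i)) ^ 8).coeff n

/-- If `p ≡ 2 (mod 3)` is prime, then the `p`-th Fourier coefficient of `η(3z)⁸` vanishes. -/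
theorem etaCoeff_eq_zero (p : ℕ) (hp : p.Prime) (h2 : p % 3 = 2) : etaCoeff p = 0 := by
  obtain ⟨m, rfl⟩ : ∃ m, p = m + 1 := ⟨p - 1, (Nat.succ_pred_eq_of_pos hp.pos).symm⟩
  unfold etaCoeff
  rw [Polynomial.coeff_X_mul]
  have hexp : (∏ i ∈ Finset.Icc 1 (m + 1), ((1 : Polynomial ℤ) - Polynomial.X ^ (3 * i)) ^ 8)
      = Polynomial.expand ℤ 3
        (∏ i ∈ Finset.Icc 1 (m + 1), ((1 : Polynomial ℤ) - Polynomial.X ^ i) ^ 8) := by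
    rw [map_prod]
    refine Finset.prod_congr rfl fun i _ => ?_
    rw [map_pow, map_sub, map_one, map_pow, Polynomial.expand_X, ← pow_mul]
  rw [hexp, Polynomial.coeff_expand (by norm_num)]
  have h3 : ¬ 3 ∣ m := by omega
  simp [h3]
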